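/- Let ε ∈ (0, 1] and t ∈ ℝ with t ≠ 0. Set a = 1 + (1 − ε²)·t² and let Q₂ be the symmetric 2×2 real matrix Q₂ = [[−1, t], [t, a/ε²]]. Then the symmetric matrix Q₂² + Q₂ is positive definite: for every nonzero vector v ∈ ℝ², ⟨v, (Q₂² + Q₂)·v⟩ > 0. -/

import Mathlib

/-- Positive definiteness of `Q₂² + Q₂` for the matrix `Q₂ = [[-1, t],[t, a/ε²]]`
with `a = 1 + (1 - ε²)·t²`, used to show that the rotated hyperboloid families
in the Courant-type uniqueness theorem are noncharacteristic. -/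
theorem Q2_sq_add_Q2_posDef (ε t : ℝ) (hε : ε ∈ Set.Ioc (0 : ℝ) 1) (ht : t ≠ 0)
    (a : ℝ) (ha : a = 1 + (1 - ε ^ 2) * t ^ 2)
    (Q₂ : Matrix (Fin 2) (Fin 2) ℝ) (hQ : Q₂ = !![-1, t; t, a / ε ^ 2]) :
    ∀ v : Fin 2 → ℝ, v ≠ 0 → 0 < dotProduct v ((Q₂ ^ 2 + Q₂).mulVec v) := by
  obtain ⟨hε0, hε1⟩ := hε
  intro v hv
  set b : ℝ := a / ε ^ 2 with hb
  have hεsq : (0:ℝ) < ε ^ 2 := by positivity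
  have hapos : 0 < a := by
    have h2 : ε ^ 2 ≤ 1 := by nlinarith
    nlinarith [mul_nonneg (by linarith : (0:ℝ) ≤ 1 - ε ^ 2) (sq_nonneg t)]
  have hbpos : 0 < b := div_pos hapos hεsq
  subst hQ
  simp only [pow_two, dotProduct, Matrix.mulVec, Matrix.add_apply,
    Matrix.mul_apply, Fin.sum_univ_two, Matrix.of_apply, Matrix.cons_val', Matrix.cons_val_zero,
    Matrix.cons_val_one, Matrix.head_cons, Matrix.empty_val',
    Matrix.cons_val_fin_one, Matrix.head_fin_const]
  rcases eq_or_ne (v 1) 0 with h1 | h1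
  · have h0 : v 0 ≠ 0 := by
      intro h0
      apply hv
      funext i
      fin_cases i <;> simp [h0, h1]
    rw [h1]
    have : 0 < t ^ 2 * v 0 ^ 2 := by positivity
    nlinarith [this]
  · have hy : 0 < v 1 ^ 2 := by positivity
    nlinarith [sq_nonneg (t * v 0 + b * v 1), mul_pos hbpos hy, sq_nonneg t,
      mul_pos (mul_pos hbpos hbpos) hy, mul_nonneg (sq_nonneg t) hy.le]
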